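/- Naturality of gradient descent: let φ : N → M be a function between finite sets, f : ℝ^N → ℝ continuously differentiable, and γ > 0. Then the discrete dynamical system y ↦ y - γ∇(f ∘ φ^*)(y) on ℝ^M equals the system y ↦ y + φ_*((x ↦ x - γ∇f(x))(φ^*(y)) - φ^*(y)). -/

import Mathlib

/-- Pushforward along `φ : N → M` on Euclidean space: sums inputs over preimages. -/
noncomputable def pushE {N M : Type*} [Fintype N] [Fintype M] [DecidableEq M] (φ : N → M) :
    EuclideanSpace ℝ N →ₗ[ℝ] EuclideanSpace ℝ M where
  toFun x := WithLp.toLp 2 (fun j => ∑ i, if φ i = j then x i else 0)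
  map_add' x y := by
    ext j
    simp only [PiLp.add_apply, PiLp.toLp_apply]
    rw [← Finset.sum_add_distrib]
    exact Finset.sum_congr rfl fun i _ => by split_ifs <;> simp
  map_smul' c x := by
    ext j
    simp only [PiLp.toLp_apply, PiLp.smul_apply, smul_eq_mul, RingHom.id_apply]
    rw [Finset.mul_sum]
    exact Finset.sum_congr rfl fun i _ => by split_ifs <;> simp

/-- Pullback along `φ : N → M` on Euclidean space: precomposition with `φ`. -/
def pullE {N M : Type*} [Fintype N] [Fintype M] (φ : N → M) :
    EuclideanSpace ℝ M →ₗ[ℝ] EuclideanSpace ℝ N where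
  toFun y := WithLp.toLp 2 (fun i => y (φ i))
  map_add' _ _ := rfl
  map_smul' _ _ := rfl


section
variable {N M : Type*} [Fintype N] [Fintype M] [DecidableEq M]

/-- `pushE φ` is adjoint to `pullE φ`. -/
lemma adjE (φ : N → M) (x : EuclideanSpace ℝ N) (v : EuclideanSpace ℝ M) :
    (inner ℝ (pushE φ x) v : ℝ) = inner ℝ x (pullE φ v) := by
  simp only [PiLp.inner_apply, RCLike.inner_apply, starRingEnd_apply, star_trivial,
    pushE, pullE, LinearMap.coe_mk, AddHom.coe_mk, PiLp.toLp_apply]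
  simp_rw [Finset.mul_sum, mul_ite, mul_zero]
  rw [Finset.sum_comm]
  simp
  rfl

/-- Chain rule for gradients along the pullback. -/
lemma grad_comp (φ : N → M) (f : EuclideanSpace ℝ N → ℝ) (hf : ContDiff ℝ 1 f)
    (y : EuclideanSpace ℝ M) :
    gradient (fun y => f (pullE φ y)) y = pushE φ (gradient f (pullE φ y)) := by
  set L := LinearMap.toContinuousLinearMap (pullE φ)
  have hd : HasFDerivAt (fun y => f (pullE φ y)) ((fderiv ℝ f (pullE φ y)).comp L) y :=
    ((hf.differentiable one_ne_zero (pullE φ y)).hasFDerivAt).comp y L.hasFDerivAt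
  apply (InnerProductSpace.toDual ℝ (EuclideanSpace ℝ M)).injective
  ext v
  have h1 : (InnerProductSpace.toDual ℝ (EuclideanSpace ℝ M))
      (gradient (fun y => f (pullE φ y)) y) = fderiv ℝ (fun y => f (pullE φ y)) y := by
    simp [gradient]
  rw [h1, hd.fderiv]
  symm
  have h2 : (InnerProductSpace.toDual ℝ (EuclideanSpace ℝ N))
      (gradient f (pullE φ y)) = fderiv ℝ f (pullE φ y) := by
    simp [gradient]
  calc inner ℝ (pushE φ (gradient f (pullE φ y))) v
      = (inner ℝ (gradient f (pullE φ y)) (pullE φ v) : ℝ) := adjE φ _ v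
    _ = fderiv ℝ f (pullE φ y) (pullE φ v) := by
        rw [← h2]; simp [InnerProductSpace.toDual_apply_apply]
    _ = _ := rfl

end

/-- Naturality of gradient descent: applying gradient descent with step size `γ` to the
composite problem `f ∘ φ^*` agrees with transporting the gradient-descent system of `f`
along the discrete-dynamics functor `Dynam_D(φ) : v ↦ id + φ_* ∘ (v - id) ∘ φ^*`. -/
theorem gradient_descent_natural {N M : Type*} [Fintype N] [Fintype M] [DecidableEq M]
    (φ : N → M) (f : EuclideanSpace ℝ N → ℝ) (hf : ContDiff ℝ 1 f)
    (γ : ℝ) (hγ : 0 < γ) (y : EuclideanSpace ℝ M) :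
    y - γ • gradient (fun y => f (pullE φ y)) y =
      y + pushE φ ((pullE φ y - γ • gradient f (pullE φ y)) - pullE φ y) := by
  rw [grad_comp φ f hf y, sub_sub_cancel_left, map_neg, map_smul, sub_eq_add_neg, ← smul_neg]
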